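/- Let Ω ⊂ ℝ^n be a bounded C^{1,α} domain with α ∈ (0,s), let x₀ ∈ cl(Ω), R ∈ (0,1], β ∈ (0,1], and let g ∈ L¹(Ω∩B_{2R}(x₀)). Then there exists a constant c, depending only on n, β and Ω, such that for all x, y ∈ cl(Ω)∩B_{R/4}(x₀) which are Ω-Lebesgue points of g (i.e. the averages ⨍_{Ω∩B_ρ(x)} g dλ converge to g(x) as ρ → 0⁺, and similarly at y), one has |g(x) − g(y)| ≤ c (M^{#,Ω}_{β,R}(g)(x) + M^{#,Ω}_{β,R}(g)(y)) |x−y|^β. -/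

import Mathlib

open MeasureTheory Metric Set Filter
open scoped ENNReal NNReal Topology
attribute [local instance] Classical.propDecidable

noncomputable section

namespace NonlocalCZ

/-- Euclidean space `ℝ^n`. -/
abbrev Rn (n : ℕ) : Type := EuclideanSpace ℝ (Fin n)

/-- The last coordinate of a point of `ℝ^n`. -/
def lastCoord {n : ℕ} (x : Rn n) : ℝ :=
  if h : n = 0 then 0 else x ⟨n - 1, by omega⟩

/-- Gagliardo seminorm `[g]_{W^{σ,p}(Q)}`, valued in `ℝ≥0∞`. -/
def gagliardo (n : ℕ) (σ p : ℝ) (Q : Set (Rn n)) (g : Rn n → ℝ) : ℝ≥0∞ :=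
  (∫⁻ x in Q, ∫⁻ y in Q,
      ENNReal.ofReal (|g x - g y| ^ p / ‖x - y‖ ^ ((n : ℝ) + σ * p))) ^ (1 / p)

/-- `L^p` norm over a set, valued in `ℝ≥0∞`. -/
def lpNorm (n : ℕ) (p : ℝ) (E : Set (Rn n)) (g : Rn n → ℝ) : ℝ≥0∞ :=
  (∫⁻ x in E, ENNReal.ofReal (|g x| ^ p)) ^ (1 / p)

/-- `L^p` norm over a subset of the product space. -/
def lpNormProd (n : ℕ) (p : ℝ) (E : Set (Rn n × Rn n)) (g : Rn n × Rn n → ℝ) : ℝ≥0∞ :=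
  (∫⁻ q in E, ENNReal.ofReal (|g q| ^ p)) ^ (1 / p)

/-- `L^p` norm of an `ℝ≥0∞`-valued function over a set. -/
def lpNormE (n : ℕ) (p : ℝ) (E : Set (Rn n)) (g : Rn n → ℝ≥0∞) : ℝ≥0∞ :=
  (∫⁻ x in E, g x ^ p) ^ (1 / p)

/-- Membership in the fractional Sobolev space `W^{σ,p}(Q)`. -/
def MemW (n : ℕ) (σ p : ℝ) (Q : Set (Rn n)) (g : Rn n → ℝ) : Prop :=
  AEMeasurable g volume ∧ gagliardo n σ p Q g < ⊤ ∧ lpNorm n p Q g < ⊤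

/-- The norm of the tail space `L¹_{2s}(ℝ^n)`. -/
def tailNorm (n : ℕ) (s : ℝ) (g : Rn n → ℝ) : ℝ≥0∞ :=
  ∫⁻ y, ENNReal.ofReal (|g y| / (1 + ‖y‖) ^ ((n : ℝ) + 2 * s))

/-- The nonlocal tail `Tail(g; B_R(x₀))`. -/
def tail (n : ℕ) (s : ℝ) (g : Rn n → ℝ) (x₀ : Rn n) (R : ℝ) : ℝ≥0∞ :=
  ENNReal.ofReal (R ^ (2 * s)) *
    ∫⁻ y in (ball x₀ R)ᶜ, ENNReal.ofReal (|g y| / ‖y - x₀‖ ^ ((n : ℝ) + 2 * s))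

/-- Kernel coefficient with ellipticity constant `Λ`. -/
def IsKernel (n : ℕ) (Λ : ℝ) (A : Rn n → Rn n → ℝ) : Prop :=
  Measurable (fun q : Rn n × Rn n => A q.1 q.2) ∧
    (∀ x y, A x y = A y x) ∧ ∀ x y, Λ⁻¹ ≤ A x y ∧ A x y ≤ Λ

/-- Weak solution of `L_A u = f` in `D`: for all test functions `ψ ∈ W^{s,2}(ℝ^n)`
vanishing a.e. outside `D`, the double integral converges absolutely and the weak
formulation holds. -/
def IsWeakSol (n : ℕ) (s : ℝ) (A : Rn n → Rn n → ℝ) (D : Set (Rn n))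
    (f u : Rn n → ℝ) : Prop :=
  ∀ ψ : Rn n → ℝ, MemW n s 2 Set.univ ψ → (∀ᵐ x ∂volume, x ∉ D → ψ x = 0) →
    MeasureTheory.Integrable (fun q : Rn n × Rn n =>
      (u q.1 - u q.2) * (ψ q.1 - ψ q.2) * A q.1 q.2 / ‖q.1 - q.2‖ ^ ((n : ℝ) + 2 * s)) ∧
    ∫ q : Rn n × Rn n,
        (u q.1 - u q.2) * (ψ q.1 - ψ q.2) * A q.1 q.2 / ‖q.1 - q.2‖ ^ ((n : ℝ) + 2 * s)
      = ∫ x in D, f x * ψ x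

/-- Distance to the boundary of `Ω`. -/
def distB (n : ℕ) (Ω : Set (Rn n)) (x : Rn n) : ℝ := Metric.infDist x (frontier Ω)

/-- The quotient `u/d^s`. -/
def overDs (n : ℕ) (s : ℝ) (Ω : Set (Rn n)) (u : Rn n → ℝ) (x : Rn n) : ℝ :=
  u x / distB n Ω x ^ s

/-- Bounded `C^{1,α}` domain: near each boundary point, after a rigid motion, the domain
is the region above the graph of a `C^1` function with `α`-Hölder continuous gradient. -/
def IsC1Domain (n : ℕ) (α : ℝ) (Ω : Set (Rn n)) : Prop :=
  IsOpen Ω ∧ Bornology.IsBounded Ω ∧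
  ∀ z ∈ frontier Ω, ∃ (r : ℝ) (Ψ : Rn n ≃ᵢ Rn n) (γ : Rn n → ℝ),
    0 < r ∧ ContDiff ℝ 1 γ ∧
    (∃ C : ℝ, ∀ x y : Rn n, ‖fderiv ℝ γ x - fderiv ℝ γ y‖ ≤ C * ‖x - y‖ ^ α) ∧
    (∀ x y : Rn n, (∀ i : Fin n, (i : ℕ) ≠ n - 1 → x i = y i) → γ x = γ y) ∧
    Ψ '' (Ω ∩ ball z r) = {x ∈ Ψ '' ball z r | γ x < lastCoord x}

/-- Mean of a real function over a set (with respect to Lebesgue measure). -/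
def setAvg (n : ℕ) (E : Set (Rn n)) (g : Rn n → ℝ) : ℝ := ⨍ x in E, g x

/-- Mean of a kernel coefficient over `B × B`. -/
def kernelAvg (n : ℕ) (A : Rn n → Rn n → ℝ) (B : Set (Rn n)) : ℝ :=
  ⨍ q in B ×ˢ B, A q.1 q.2

/-- `(δ,R)`-vanishing condition in `B × B`. -/
def IsVanishing (n : ℕ) (δ R : ℝ) (B : Set (Rn n)) (A : Rn n → Rn n → ℝ) : Prop :=
  ∀ (x₀ : Rn n) (r : ℝ), 0 < r → r ≤ R → ball x₀ r ⊆ B →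
    ⨍ q in (ball x₀ r) ×ˢ (ball x₀ r), |A q.1 q.2 - kernelAvg n A (ball x₀ r)| ≤ δ

/-- Dini continuity of a kernel coefficient in `B × B` with modulus `ω`. -/
def DiniKernel (n : ℕ) (B : Set (Rn n)) (A : Rn n → Rn n → ℝ) (ω : ℝ → ℝ) : Prop :=
  (∀ ⦃a b : ℝ⦄, 0 ≤ a → a ≤ b → ω a ≤ ω b) ∧ ω 0 = 0 ∧ (∀ t, 0 ≤ t → 0 ≤ ω t) ∧
  (∀ x₁ x₂ y₁ y₂ : Rn n, x₁ ∈ B → x₂ ∈ B → y₁ ∈ B → y₂ ∈ B →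
      |A x₁ y₁ - A x₂ y₂| ≤ ω (max ‖x₁ - x₂‖ ‖y₁ - y₂‖)) ∧
  MeasureTheory.IntegrableOn (fun t => ω t / t) (Set.Ioo 0 1)

/-- `α`-Hölder continuity of a kernel coefficient in `B × B` with constant `K`. -/
def HolderKernel (n : ℕ) (α K : ℝ) (B : Set (Rn n)) (A : Rn n → Rn n → ℝ) : Prop :=
  ∀ x₁ x₂ y₁ y₂ : Rn n, x₁ ∈ B → x₂ ∈ B → y₁ ∈ B → y₂ ∈ B →
    |A x₁ y₁ - A x₂ y₂| ≤ K * max ‖x₁ - x₂‖ ‖y₁ - y₂‖ ^ α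

/-- Lorentz `L^{p,1}` norm: `∫_0^∞ |{x ∈ E : |f x| > t}|^{1/p} dt`. -/
def lorentz1 (n : ℕ) (p : ℝ) (E : Set (Rn n)) (f : Rn n → ℝ) : ℝ≥0∞ :=
  ∫⁻ t in Set.Ioi (0 : ℝ), (volume {x ∈ E | t < |f x|}) ^ (1 / p)

/-- Weak `L^{p,∞}` norm: `sup_{t>0} t |{x ∈ E : |f x| > t}|^{1/p}`. -/
def weakLp (n : ℕ) (p : ℝ) (E : Set (Rn n)) (f : Rn n → ℝ) : ℝ≥0∞ :=
  ⨆ t : {t : ℝ // 0 < t},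
    ENNReal.ofReal t.1 * (volume {x ∈ E | t.1 < |f x|}) ^ (1 / p)

/-- Essential supremum of `|g|` over a set. -/
def essSupOn (n : ℕ) (E : Set (Rn n)) (g : Rn n → ℝ) : ℝ≥0∞ :=
  essSup (fun x => ENNReal.ofReal |g x|) (volume.restrict E)

/-- Fractional maximal function `M^Ω_{β,R}`. -/
def fracMax (n : ℕ) (β R : ℝ) (Ω : Set (Rn n)) (g : Rn n → ℝ) (z : Rn n) : ℝ≥0∞ :=
  ⨆ ρ : {t : ℝ // 0 < t ∧ t < R},
    ENNReal.ofReal (ρ.1 ^ β) * ⨍⁻ x in Ω ∩ ball z ρ.1, ENNReal.ofReal |g x| ∂volume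

/-- Fractional sharp maximal function `M^{#,Ω}_{β,R}`. -/
def sharpMax (n : ℕ) (β R : ℝ) (Ω : Set (Rn n)) (g : Rn n → ℝ) (z : Rn n) : ℝ≥0∞ :=
  ⨆ ρ : {t : ℝ // 0 < t ∧ t ≤ R},
    ENNReal.ofReal (ρ.1 ^ (-β)) *
      ⨍⁻ x in Ω ∩ ball z ρ.1, ENNReal.ofReal |g x - setAvg n (Ω ∩ ball z ρ.1) g| ∂volume

/-- Truncated Wolff potential `W^g_{β,p}(z,r)`. -/
def wolff (n : ℕ) (β p : ℝ) (g : Rn n → ℝ≥0∞) (z : Rn n) (r : ℝ) : ℝ≥0∞ :=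
  ∫⁻ ρ in Set.Ioo (0 : ℝ) r,
    ((∫⁻ x in ball z ρ, g x) / ENNReal.ofReal (ρ ^ ((n : ℝ) - β * p))) ^ (1 / (p - 1)) *
      ENNReal.ofReal ρ⁻¹

/-- The quotient `u/φ` with the convention `0` where `φ = 0`. -/
def quotPhi {n : ℕ} (u φ : Rn n → ℝ) (x : Rn n) : ℝ := if φ x = 0 then 0 else u x / φ x

/-- Local excess functional `E_loc(u; B_ρ(z))`. -/
def elocE (n : ℕ) (u φ : Rn n → ℝ) (z : Rn n) (ρ : ℝ) : ℝ≥0∞ :=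
  ⨍⁻ x in ball z ρ, ENNReal.ofReal |quotPhi u φ x - setAvg n (ball z ρ) (quotPhi u φ)| ∂volume

/-- Excess functional `E(u; B_ρ(z))` with tail term. -/
def excE (n : ℕ) (s : ℝ) (u φ : Rn n → ℝ) (z : Rn n) (ρ : ℝ) : ℝ≥0∞ :=
  elocE n u φ z ρ + ENNReal.ofReal (max (φ z) (ρ ^ s))⁻¹ *
    tail n s (fun y => u y - setAvg n (ball z ρ) (quotPhi u φ) * φ y) z ρ

lemma abs_coord_le {n : ℕ} (i : Fin n) (δ : Rn n) : |δ i| ≤ ‖δ‖ := by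
  rw [EuclideanSpace.norm_eq, ← Real.sqrt_sq_eq_abs]
  apply Real.sqrt_le_sqrt
  have := Finset.single_le_sum (f := fun j => ‖δ j‖ ^ 2) (fun j _ => by positivity)
    (Finset.mem_univ i)
  simpa [Real.norm_eq_abs, sq_abs] using this

lemma horiz_norm_le {n : ℕ} (i : Fin n) (δ : Rn n) :
    ‖δ - (δ i) • EuclideanSpace.single i (1:ℝ)‖ ≤ ‖δ‖ := by
  rw [EuclideanSpace.norm_eq, EuclideanSpace.norm_eq]
  apply Real.sqrt_le_sqrt
  apply Finset.sum_le_sum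
  intro j _
  by_cases h : j = i
  · subst h; simp; positivity
  · simp [EuclideanSpace.single_apply, h]

lemma chartCone {n : ℕ} (hn : 2 ≤ n) {α : ℝ} (hα : 0 < α) {Ω : Set (Rn n)}
    (hΩ : IsC1Domain n α Ω) {z : Rn n} (hz : z ∈ frontier Ω) :
    ∃ r₁ c₁ : ℝ, 0 < r₁ ∧ 0 < c₁ ∧ c₁ ≤ 1 ∧ ∀ z' ∈ closure Ω, dist z' z < r₁ →
      ∀ ρ : ℝ, 0 < ρ → ρ ≤ r₁ → ∃ p, ball p (c₁ * ρ) ⊆ Ω ∩ ball z' ρ := by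
  obtain ⟨r, Ψ, γ, hr, hγ, ⟨C, hC⟩, hind, hgraph⟩ := hΩ.2.2 z hz
  have hi : n - 1 < n := by omega
  set i : Fin n := ⟨n - 1, hi⟩ with hidef
  set Z := Ψ z with hZ
  have hrα : (0:ℝ) ≤ r ^ α := Real.rpow_nonneg hr.le α
  set L : ℝ := ‖fderiv ℝ γ Z‖ + |C| * r ^ α + 1 with hLdef
  have hL1 : 1 ≤ L := by
    have h0 : 0 ≤ ‖fderiv ℝ γ Z‖ := norm_nonneg _
    have h0' : 0 ≤ |C| * r ^ α := by positivity
    simp only [hLdef]; linarith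
  have hL0 : 0 < L := by linarith
  have hfb : ∀ u ∈ ball Z r, ‖fderiv ℝ γ u‖ ≤ L := by
    intro u hu
    have h1 : ‖fderiv ℝ γ u‖ ≤ ‖fderiv ℝ γ Z‖ + ‖fderiv ℝ γ u - fderiv ℝ γ Z‖ := by
      have := norm_sub_norm_le (fderiv ℝ γ u) (fderiv ℝ γ Z)
      linarith [norm_sub_rev (fderiv ℝ γ u) (fderiv ℝ γ Z) ▸ this]
    have h2 : ‖fderiv ℝ γ u - fderiv ℝ γ Z‖ ≤ C * ‖u - Z‖ ^ α := hC u Z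
    have h3 : C * ‖u - Z‖ ^ α ≤ |C| * r ^ α := by
      have hle : ‖u - Z‖ ^ α ≤ r ^ α :=
        Real.rpow_le_rpow (norm_nonneg _) (mem_ball_iff_norm.1 hu).le hα.le
      have : C * ‖u - Z‖ ^ α ≤ |C| * ‖u - Z‖ ^ α :=
        mul_le_mul_of_nonneg_right (le_abs_self C) (Real.rpow_nonneg (norm_nonneg _) α)
      exact this.trans (mul_le_mul_of_nonneg_left hle (abs_nonneg C))
    simp only [hLdef]; linarith
  have hLip : ∀ u ∈ ball Z r, ∀ v ∈ ball Z r, ‖γ u - γ v‖ ≤ L * ‖u - v‖ := by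
    intro u hu v hv
    exact (convex_ball Z r).norm_image_sub_le_of_norm_fderiv_le
      (fun w _ => (hγ.differentiable one_ne_zero).differentiableAt) hfb hv hu
  have hlast : ∀ x : Rn n, lastCoord x = x i := by
    intro x; unfold lastCoord; rw [dif_neg (by omega)]
  refine ⟨r / 2, (8 * L)⁻¹, by positivity, by positivity, by
    rw [inv_le_one_iff₀]; right; linarith, ?_⟩
  intro z' hz' hdz' ρ hρ hρr
  set w := Ψ z' with hw
  have hwZ : dist w Z < r / 2 := by rw [hw, hZ, Ψ.dist_eq]; exact hdz'
  -- γ w ≤ w i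
  have hwcl : z' ∈ closure (Ω ∩ ball z r) := by
    rw [Metric.mem_closure_iff]
    intro ε hε
    obtain ⟨b, hb, hbd⟩ := Metric.mem_closure_iff.1 hz' (min ε (r / 2 - dist z' z))
      (lt_min hε (by linarith))
    refine ⟨b, ⟨hb, mem_ball.2 ?_⟩, lt_of_lt_of_le hbd (min_le_left _ _)⟩
    have h1 : dist z' b < r / 2 - dist z' z := lt_of_lt_of_le hbd (min_le_right _ _)
    have := dist_triangle b z' z
    rw [dist_comm b z'] at this
    linarith
  have hwi : γ w ≤ w i := by
    have hcl : IsClosed {x : Rn n | γ x ≤ x i} :=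
      isClosed_le hγ.continuous (EuclideanSpace.proj (𝕜 := ℝ) i).continuous
    have hsub : Ψ '' (Ω ∩ ball z r) ⊆ {x : Rn n | γ x ≤ x i} := by
      rw [hgraph]; intro x hx
      simp only [mem_setOf_eq] at hx ⊢
      exact (hlast x ▸ hx.2).le
    have : w ∈ closure (Ψ '' (Ω ∩ ball z r)) :=
      image_closure_subset_closure_image Ψ.continuous (mem_image_of_mem _ hwcl)
    exact closure_minimal hsub hcl this
  set e : Rn n := EuclideanSpace.single i (1:ℝ) with he
  set rr : ℝ := (8 * L)⁻¹ * ρ with hrr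
  have hrr0 : 0 < rr := by positivity
  have hrrρ : rr ≤ ρ / 8 := by
    rw [hrr]
    have : (8 * L)⁻¹ ≤ (8:ℝ)⁻¹ := by
      apply inv_anti₀ (by norm_num); linarith
    calc (8 * L)⁻¹ * ρ ≤ (8:ℝ)⁻¹ * ρ := by
          exact mul_le_mul_of_nonneg_right this hρ.le
      _ = ρ / 8 := by ring
  set p := w + (ρ / 2) • e with hp
  refine ⟨Ψ.symm p, fun q hq => ?_⟩
  set v := Ψ q with hv
  have hδlt : ‖v - p‖ < rr := by
    calc ‖v - p‖ = dist (Ψ q) (Ψ (Ψ.symm p)) := by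
          rw [← dist_eq_norm, hv, Ψ.apply_symm_apply]
      _ = dist q (Ψ.symm p) := Ψ.dist_eq _ _
      _ < rr := mem_ball.1 hq
  set δ := v - p with hδ
  have hvpd : v = p + δ := by rw [hδ]; abel
  have hnorme : ‖e‖ = 1 := by rw [he, EuclideanSpace.norm_single]; norm_num
  have hsm : ‖(ρ / 2) • e‖ = ρ / 2 := by
    rw [norm_smul, hnorme, mul_one, Real.norm_eq_abs, abs_of_pos (by linarith)]
  have hvw : ‖v - w‖ ≤ ‖δ‖ + ρ / 2 := by
    have hdec : v - w = δ + (ρ / 2) • e := by rw [hδ, hp]; abel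
    calc ‖v - w‖ = ‖δ + (ρ / 2) • e‖ := by rw [hdec]
      _ ≤ ‖δ‖ + ‖(ρ / 2) • e‖ := norm_add_le _ _
      _ = ‖δ‖ + ρ / 2 := by rw [hsm]
  have hvwρ : ‖v - w‖ < ρ := by
    have := hδlt
    linarith [hrrρ]
  have hvZ : v ∈ ball Z r := by
    rw [mem_ball, dist_eq_norm]
    have h1 : ‖v - Z‖ ≤ ‖v - w‖ + ‖w - Z‖ := norm_sub_le_norm_sub_add_norm_sub v w Z
    have h2 : ‖w - Z‖ < r / 2 := by rwa [← dist_eq_norm]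
    have : ρ ≤ r / 2 := hρr
    linarith
  set v' := w + (δ - (δ i) • e) with hv'
  have hv'w : ‖v' - w‖ ≤ ‖δ‖ := by
    have : v' - w = δ - (δ i) • e := by rw [hv']; abel
    rw [this, he]; exact horiz_norm_le i δ
  have hwZball : w ∈ ball Z r := mem_ball.2 (by linarith)
  have hv'Z : v' ∈ ball Z r := by
    rw [mem_ball, dist_eq_norm]
    have h1 : ‖v' - Z‖ ≤ ‖v' - w‖ + ‖w - Z‖ := norm_sub_le_norm_sub_add_norm_sub v' w Z
    have h2 : ‖w - Z‖ < r / 2 := by rwa [← dist_eq_norm]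
    have h3 : ‖δ‖ < rr := hδlt
    have : rr ≤ ρ / 8 := hrrρ
    have : ρ ≤ r / 2 := hρr
    linarith
  have hei : e i = 1 := by rw [he]; simp [EuclideanSpace.single_apply]
  have hγv'v : γ v' = γ v := by
    apply hind
    intro j hj
    have hji : j ≠ i := fun h => hj (by rw [h])
    have hej : e j = 0 := by rw [he]; simp [EuclideanSpace.single_apply, hji]
    have h1 : v' j = w j + (δ j - δ i * e j) := by
      rw [hv']; simp [PiLp.add_apply, PiLp.sub_apply, PiLp.smul_apply, smul_eq_mul]
    have h2 : v j = w j + (ρ / 2) * e j + δ j := by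
      rw [hvpd, hp]; simp [PiLp.add_apply, PiLp.smul_apply, smul_eq_mul]
    rw [h1, h2, hej]; ring
  have hγest : γ v' ≤ γ w + L * ‖δ‖ := by
    have := hLip v' hv'Z w hwZball
    have habs : |γ v' - γ w| ≤ L * ‖v' - w‖ := by rwa [Real.norm_eq_abs] at this
    have := abs_le.1 habs
    have hmul : L * ‖v' - w‖ ≤ L * ‖δ‖ := mul_le_mul_of_nonneg_left hv'w hL0.le
    linarith [this.2]
  have hvi : v i = w i + ρ / 2 + δ i := by
    rw [hvpd, hp]
    simp [PiLp.add_apply, PiLp.smul_apply, smul_eq_mul, hei]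
  have hδi : |δ i| ≤ ‖δ‖ := abs_coord_le i δ
  clear_value v' v δ p rr e w L Z i
  have hγvlt : γ v < v i := by
    rw [← hγv'v, hvi]
    have h1 : γ v' ≤ w i + L * ‖δ‖ := by linarith [hγest, hwi]
    have h2 : ‖δ‖ < rr := hδlt
    have h3 : L * ‖δ‖ ≤ L * rr := mul_le_mul_of_nonneg_left h2.le hL0.le
    have h4 : L * rr = ρ / 8 := by rw [hrr]; field_simp
    have h5 : δ i ≥ -‖δ‖ := neg_le_of_abs_le hδi
    have h6 : ‖δ‖ ≤ ρ / 8 := h2.le.trans hrrρ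
    have hA : γ v' ≤ w i + ρ / 8 := by linarith
    have hB : -(ρ / 8) ≤ δ i := by linarith
    linarith
  have hvmem : v ∈ Ψ '' (Ω ∩ ball z r) := by
    rw [hgraph]
    refine ⟨?_, by rw [hlast]; exact hγvlt⟩
    rw [Ψ.image_ball, ← hZ]; exact hvZ
  obtain ⟨q', hq', hq'v⟩ := hvmem
  have hqq' : q' = q := Ψ.injective (by rw [hq'v, hv])
  rw [hqq'] at hq'
  refine ⟨hq'.1, mem_ball.2 ?_⟩
  have : dist q z' = ‖v - w‖ := by
    rw [hv, hw, ← Ψ.dist_eq q z', dist_eq_norm]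
  rw [this]; exact hvwρ

lemma frontier_near {n : ℕ} {Ω : Set (Rn n)} (hΩ : IsOpen Ω) {z : Rn n}
    (hz : z ∈ closure Ω) {ρ : ℝ} (hρ : 0 < ρ) (hnot : ¬ ball z ρ ⊆ Ω) :
    ∃ p ∈ frontier Ω, dist p z < ρ := by
  by_contra hc
  push_neg at hc
  have hcov : ball z ρ ⊆ Ω ∪ (closure Ω)ᶜ := by
    intro q hq
    by_cases hqΩ : q ∈ Ω
    · exact Or.inl hqΩ
    · refine Or.inr fun hqcl => ?_
      have hfr : q ∈ frontier Ω := by rw [hΩ.frontier_eq]; exact ⟨hqcl, hqΩ⟩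
      exact absurd (mem_ball.1 hq) (not_lt.2 (hc q hfr))
  obtain ⟨b, hbΩ, hbd⟩ := Metric.mem_closure_iff.1 hz ρ hρ
  obtain ⟨q, hqball, hqnΩ⟩ := not_subset.1 hnot
  have h1 : (ball z ρ ∩ Ω).Nonempty := ⟨b, mem_ball.2 (by rwa [dist_comm]), hbΩ⟩
  have h2 : (ball z ρ ∩ (closure Ω)ᶜ).Nonempty := by
    refine ⟨q, hqball, fun hqcl => hqnΩ ?_⟩
    rcases hcov hqball with h | h
    · exact h
    · exact absurd hqcl h
  obtain ⟨w, hw⟩ := (convex_ball z ρ).isPreconnected Ω (closure Ω)ᶜ hΩ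
    isClosed_closure.isOpen_compl hcov h1 h2
  exact hw.2.2 (subset_closure hw.2.1)

lemma density {n : ℕ} (hn : 2 ≤ n) {α : ℝ} (hα : 0 < α) {Ω : Set (Rn n)}
    (hΩ : IsC1Domain n α Ω) :
    ∃ cd : ℝ, 0 < cd ∧ ∀ z ∈ closure Ω, ∀ ρ : ℝ, 0 < ρ → ρ ≤ 1 →
      ENNReal.ofReal (cd * ρ ^ n) ≤ volume (Ω ∩ ball z ρ) := by
  haveI : Nonempty (Fin n) := ⟨⟨0, by omega⟩⟩
  rcases Set.eq_empty_or_nonempty Ω with hΩe | hne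
  · exact ⟨1, one_pos, by simp [hΩe]⟩
  have hfr : (frontier Ω).Nonempty := by
    rw [nonempty_frontier_iff]
    refine ⟨hne, fun h => ?_⟩
    obtain ⟨M, hM⟩ := (h ▸ hΩ.2.1 : Bornology.IsBounded (univ : Set (Rn n))).subset_closedBall 0
    have := hM (mem_univ (EuclideanSpace.single (⟨0, by omega⟩ : Fin n) (|M| + 1)))
    rw [mem_closedBall, dist_zero_right, EuclideanSpace.norm_single] at this
    have heq : ‖|M| + 1‖ = |M| + 1 := by
      rw [Real.norm_eq_abs]; exact abs_of_pos (by positivity)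
    rw [heq] at this
    linarith [le_abs_self M]
  have hc := fun (z : frontier Ω) => chartCone hn hα hΩ z.2
  choose r₁ c₁ hr₁ hc₁ hc₁le hcone using hc
  have hcomp : IsCompact (frontier Ω) :=
    Metric.isCompact_of_isClosed_isBounded isClosed_frontier
      (hΩ.2.1.closure.subset frontier_subset_closure)
  obtain ⟨t, ht⟩ := hcomp.elim_finite_subcover (fun z : frontier Ω => ball (z : Rn n) (r₁ z / 2))
    (fun z => isOpen_ball) (fun z hz => mem_iUnion.2 ⟨⟨z, hz⟩, mem_ball_self (by linarith [hr₁ ⟨z, hz⟩])⟩)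
  have htne : t.Nonempty := by
    obtain ⟨w, hw⟩ := hfr
    obtain ⟨j, hjt, _⟩ := mem_iUnion₂.1 (ht hw)
    exact ⟨j, hjt⟩
  set rmin : ℝ := t.inf' htne r₁ with hrmin
  have hrmin0 : 0 < rmin := by
    rw [hrmin, Finset.lt_inf'_iff]
    exact fun j _ => hr₁ j
  set cmin : ℝ := t.inf' htne c₁ with hcmin
  have hcmin0 : 0 < cmin := by
    rw [hcmin, Finset.lt_inf'_iff]
    exact fun j _ => hc₁ j
  set ρ0 : ℝ := min rmin 1 with hρ0
  have hρ00 : 0 < ρ0 := lt_min hrmin0 one_pos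
  have hρ01 : ρ0 ≤ 1 := min_le_right _ _
  set cs : ℝ := min cmin 1 / 2 with hcs
  have hcs0 : 0 < cs := by positivity
  have key : ∀ z₀ ∈ closure Ω, ∀ ρ : ℝ, 0 < ρ → ρ ≤ ρ0 →
      ∃ p, ball p (cs * ρ) ⊆ Ω ∩ ball z₀ ρ := by
    intro z₀ hz₀ ρ hρ hρρ0
    by_cases hin : ball z₀ (ρ / 2) ⊆ Ω
    · refine ⟨z₀, fun q hq => ?_⟩
      have hcsle : cs * ρ ≤ ρ / 2 := by
        have : cs ≤ 1 / 2 := by rw [hcs]; nlinarith [min_le_right cmin 1]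
        nlinarith
      have hq2 : q ∈ ball z₀ (ρ / 2) := mem_ball.2 ((mem_ball.1 hq).trans_le hcsle)
      exact ⟨hin hq2, mem_ball.2 ((mem_ball.1 hq2).trans (by linarith))⟩
    · obtain ⟨p, hpfr, hpd⟩ := frontier_near hΩ.1 hz₀ (by linarith) hin
      obtain ⟨j, hjt, hjball⟩ := mem_iUnion₂.1 (ht hpfr)
      have hρr₁ : ρ / 2 ≤ r₁ j := by
        have : rmin ≤ r₁ j := Finset.inf'_le _ hjt
        have : ρ ≤ r₁ j := hρρ0.trans ((min_le_left _ _).trans this)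
        linarith
      have hpd' : dist p (j : Rn n) < r₁ j := (mem_ball.1 hjball).trans_le (by linarith [hr₁ j])
      obtain ⟨p', hp'⟩ := hcone j p (frontier_subset_closure hpfr) hpd' (ρ / 2) (by linarith) hρr₁
      refine ⟨p', fun q hq => ?_⟩
      have hcsle : cs * ρ ≤ c₁ j * (ρ / 2) := by
        have h1 : cs ≤ cmin / 2 := by rw [hcs]; nlinarith [min_le_left cmin 1]
        have h2 : cmin ≤ c₁ j := Finset.inf'_le _ hjt
        nlinarith
      have hq2 : q ∈ ball p' (c₁ j * (ρ / 2)) := mem_ball.2 ((mem_ball.1 hq).trans_le hcsle)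
      obtain ⟨hqΩ, hqp⟩ := hp' hq2
      refine ⟨hqΩ, mem_ball.2 ?_⟩
      calc dist q z₀ ≤ dist q p + dist p z₀ := dist_triangle _ _ _
        _ < ρ / 2 + ρ / 2 := add_lt_add (mem_ball.1 hqp) hpd
        _ = ρ := by ring
  set v1 : ℝ≥0∞ := volume (ball (0 : Rn n) 1) with hv1
  have hv1pos : 0 < v1 := measure_ball_pos _ _ one_pos
  have hv1fin : v1 < ⊤ := measure_ball_lt_top
  set vr : ℝ := v1.toReal with hvr
  have hvr0 : 0 < vr := ENNReal.toReal_pos hv1pos.ne' hv1fin.ne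
  have hball : ∀ (p : Rn n) (rq : ℝ), 0 ≤ rq →
      volume (ball p rq) = ENNReal.ofReal (rq ^ n * vr) := by
    intro p rq hrq
    rw [Measure.addHaar_ball _ _ hrq, finrank_euclideanSpace_fin, ← hv1,
      ← ENNReal.ofReal_toReal hv1fin.ne, ← hvr,
      ← ENNReal.ofReal_mul (by positivity)]
  refine ⟨cs ^ n * vr * ρ0 ^ n, by positivity, ?_⟩
  intro z hz ρ hρ hρ1
  rcases le_or_gt ρ ρ0 with hcase | hcase
  · obtain ⟨p, hp⟩ := key z hz ρ hρ hcase
    calc ENNReal.ofReal (cs ^ n * vr * ρ0 ^ n * ρ ^ n)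
        ≤ ENNReal.ofReal ((cs * ρ) ^ n * vr) := by
          apply ENNReal.ofReal_le_ofReal
          have hρ0n : ρ0 ^ n ≤ 1 := pow_le_one₀ hρ00.le hρ01
          rw [mul_pow]
          calc cs ^ n * vr * ρ0 ^ n * ρ ^ n = cs ^ n * ρ ^ n * vr * ρ0 ^ n := by ring
            _ ≤ cs ^ n * ρ ^ n * vr * 1 :=
                mul_le_mul_of_nonneg_left hρ0n (by positivity)
            _ = cs ^ n * ρ ^ n * vr := by ring
      _ = volume (ball p (cs * ρ)) := (hball p _ (by positivity)).symm
      _ ≤ volume (Ω ∩ ball z ρ) := measure_mono hp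
  · obtain ⟨p, hp⟩ := key z hz ρ0 hρ00 le_rfl
    calc ENNReal.ofReal (cs ^ n * vr * ρ0 ^ n * ρ ^ n)
        ≤ ENNReal.ofReal ((cs * ρ0) ^ n * vr) := by
          apply ENNReal.ofReal_le_ofReal
          have hρn : ρ ^ n ≤ 1 := pow_le_one₀ hρ.le hρ1
          rw [mul_pow]
          calc cs ^ n * vr * ρ0 ^ n * ρ ^ n = cs ^ n * ρ0 ^ n * vr * ρ ^ n := by ring
            _ ≤ cs ^ n * ρ0 ^ n * vr * 1 :=
                mul_le_mul_of_nonneg_left hρn (by positivity)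
            _ = cs ^ n * ρ0 ^ n * vr := by ring
      _ = volume (ball p (cs * ρ0)) := (hball p _ (by positivity)).symm
      _ ≤ volume (Ω ∩ ball z ρ0) := measure_mono hp
      _ ≤ volume (Ω ∩ ball z ρ) :=
          measure_mono (inter_subset_inter_right _ (ball_subset_ball hcase.le))

lemma abs_setAvg_sub_le {n : ℕ} {E' E : Set (Rn n)} (hsub : E' ⊆ E)
    (h0 : volume E' ≠ 0) (hfin : volume E ≠ ⊤) {g : Rn n → ℝ}
    (hg : IntegrableOn g E) (a : ℝ) :
    |setAvg n E' g - a| ≤ (volume E').toReal⁻¹ * ∫ x in E, |g x - a| := by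
  have hfin' : volume E' ≠ ⊤ := fun h => hfin (top_le_iff.1 (h ▸ measure_mono hsub))
  have hm' : 0 < (volume E').toReal := ENNReal.toReal_pos h0 hfin'
  have hg' : IntegrableOn g E' := hg.mono_set hsub
  have hconst : IntegrableOn (fun _ => a) E' :=
    integrableOn_const hfin'
  have hconstE : IntegrableOn (fun _ => a) E :=
    integrableOn_const hfin
  have h1 : setAvg n E' g - a = (volume E').toReal⁻¹ * ∫ x in E', (g x - a) := by
    rw [setAvg, setAverage_eq, integral_sub hg' hconst, setIntegral_const, smul_eq_mul,
      smul_eq_mul]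
    rw [measureReal_def]
    field_simp [hm'.ne']
  rw [h1, abs_mul, abs_of_nonneg (inv_nonneg.2 ENNReal.toReal_nonneg)]
  apply mul_le_mul_of_nonneg_left _ (inv_nonneg.2 ENNReal.toReal_nonneg)
  have h2 : |∫ x in E', (g x - a)| ≤ ∫ x in E', |g x - a| := by
    simpa [Real.norm_eq_abs] using
      norm_integral_le_integral_norm (μ := volume.restrict E') (fun x => g x - a)
  refine h2.trans ?_
  exact setIntegral_mono_set ((hg.sub hconstE).abs)
    (Filter.Eventually.of_forall fun x => abs_nonneg _)
    (HasSubset.Subset.eventuallyLE hsub)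

lemma integral_abs_sub_avg_le {n : ℕ} {Ω : Set (Rn n)} {β R : ℝ} {g : Rn n → ℝ} {z : Rn n}
    {ρ : ℝ} (hρ : 0 < ρ) (hρR : ρ ≤ R)
    (hg : IntegrableOn g (Ω ∩ ball z ρ))
    (h0 : volume (Ω ∩ ball z ρ) ≠ 0) (hfin : volume (Ω ∩ ball z ρ) ≠ ⊤)
    (hS : sharpMax n β R Ω g z ≠ ⊤) :
    ∫ x in Ω ∩ ball z ρ, |g x - setAvg n (Ω ∩ ball z ρ) g| ≤
      ρ ^ β * (sharpMax n β R Ω g z).toReal * (volume (Ω ∩ ball z ρ)).toReal := by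
  set E := Ω ∩ ball z ρ with hE
  set a := setAvg n E g with ha
  set S := sharpMax n β R Ω g z with hSdef
  have hle : ENNReal.ofReal (ρ ^ (-β)) *
      (⨍⁻ x in E, ENNReal.ofReal |g x - a| ∂volume) ≤ S :=
    le_iSup (fun σ : {t : ℝ // 0 < t ∧ t ≤ R} => ENNReal.ofReal (σ.1 ^ (-β)) *
      ⨍⁻ x in Ω ∩ ball z σ.1, ENNReal.ofReal |g x - setAvg n (Ω ∩ ball z σ.1) g| ∂volume)
      ⟨ρ, hρ, hρR⟩
  set I := ∫⁻ x in E, ENNReal.ofReal |g x - a| with hI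
  rw [setLAverage_eq] at hle
  have hρβpos : 0 < ρ ^ β := Real.rpow_pos_of_pos hρ β
  have hofneg : ENNReal.ofReal (ρ ^ (-β)) = (ENNReal.ofReal (ρ ^ β))⁻¹ := by
    rw [Real.rpow_neg hρ.le, ENNReal.ofReal_inv_of_pos hρβpos]
  have hne0 : ENNReal.ofReal (ρ ^ β) ≠ 0 := (ENNReal.ofReal_pos.2 hρβpos).ne'
  have hIle : I ≤ ENNReal.ofReal (ρ ^ β) * S * volume E := by
    have h1 : I / volume E ≤ ENNReal.ofReal (ρ ^ β) * S := by
      rw [hofneg] at hle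
      calc I / volume E
          = ENNReal.ofReal (ρ ^ β) * ((ENNReal.ofReal (ρ ^ β))⁻¹ * (I / volume E)) := by
            rw [← mul_assoc, ENNReal.mul_inv_cancel hne0 ENNReal.ofReal_ne_top, one_mul]
        _ ≤ ENNReal.ofReal (ρ ^ β) * S := mul_le_mul_right hle _
    calc I = I / volume E * volume E := (ENNReal.div_mul_cancel h0 hfin).symm
      _ ≤ ENNReal.ofReal (ρ ^ β) * S * volume E := mul_le_mul_left h1 _
  have hmeas : AEStronglyMeasurable (fun x => g x - a) (volume.restrict E) :=
    hg.1.sub aestronglyMeasurable_const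
  have heq : ∫ x in E, |g x - a| = I.toReal := by
    rw [hI, integral_eq_lintegral_of_nonneg_ae
      (Filter.Eventually.of_forall fun x => abs_nonneg _) hmeas.norm]
  calc ∫ x in E, |g x - a| = I.toReal := heq
    _ ≤ (ENNReal.ofReal (ρ ^ β) * S * volume E).toReal := by
        apply ENNReal.toReal_mono
        · exact ENNReal.mul_ne_top (ENNReal.mul_ne_top ENNReal.ofReal_ne_top hS) hfin
        · exact hIle
    _ = ρ ^ β * S.toReal * (volume E).toReal := by
        rw [ENNReal.toReal_mul, ENNReal.toReal_mul, ENNReal.toReal_ofReal hρβpos.le]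

lemma vol_ball_eq {n : ℕ} (hn : 2 ≤ n) (p : Rn n) {rq : ℝ} (hrq : 0 ≤ rq) :
    volume (ball p rq) =
      ENNReal.ofReal (rq ^ n * (volume (ball (0 : Rn n) 1)).toReal) := by
  haveI : Nonempty (Fin n) := ⟨⟨0, by omega⟩⟩
  rw [Measure.addHaar_ball _ _ hrq, finrank_euclideanSpace_fin, ENNReal.ofReal_mul
    (by positivity), ENNReal.ofReal_toReal (measure_ball_lt_top (x := (0:Rn n)) (r := 1)).ne]

lemma step {n : ℕ} (hn : 2 ≤ n) {Ω : Set (Rn n)} {β R : ℝ} (hβ : 0 < β) {cd : ℝ}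
    (hcd : 0 < cd)
    (hdens : ∀ z ∈ closure Ω, ∀ ρ : ℝ, 0 < ρ → ρ ≤ 1 →
      ENNReal.ofReal (cd * ρ ^ n) ≤ volume (Ω ∩ ball z ρ))
    {g : Rn n → ℝ} {z z' : Rn n} (hz : z ∈ closure Ω) (hz' : z' ∈ closure Ω)
    {ρ ρ' : ℝ} (h0' : 0 < ρ') (hρρ : ρ' ≤ ρ) (h2ρ : ρ ≤ 2 * ρ') (hρR : ρ ≤ R) (hR1 : R ≤ 1)
    (hsub : ball z' ρ' ⊆ ball z ρ)
    (hg : IntegrableOn g (Ω ∩ ball z ρ))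
    (hS : sharpMax n β R Ω g z ≠ ⊤) :
    |setAvg n (Ω ∩ ball z' ρ') g - setAvg n (Ω ∩ ball z ρ) g| ≤
      2 ^ n * (volume (ball (0 : Rn n) 1)).toReal / cd *
        (ρ ^ β * (sharpMax n β R Ω g z).toReal) := by
  have hρ0 : 0 < ρ := h0'.trans_le hρρ
  have hρ1 : ρ ≤ 1 := hρR.trans hR1
  set vr : ℝ := (volume (ball (0 : Rn n) 1)).toReal with hvr
  have hvr0 : 0 < vr :=
    ENNReal.toReal_pos (measure_ball_pos _ _ one_pos).ne' measure_ball_lt_top.ne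
  set E' := Ω ∩ ball z' ρ' with hE'
  set E := Ω ∩ ball z ρ with hE
  have hEsub : E' ⊆ E := inter_subset_inter_right _ hsub
  have hfinE : volume E ≠ ⊤ :=
    ((measure_mono inter_subset_right).trans_lt measure_ball_lt_top).ne
  have hfinE' : volume E' ≠ ⊤ := fun h => hfinE (top_le_iff.1 (h ▸ measure_mono hEsub))
  have hdens' := hdens z' hz' ρ' h0' (hρρ.trans hρ1)
  have h0E' : volume E' ≠ 0 := by
    refine fun h => absurd (h ▸ hdens') ?_
    simp only [nonpos_iff_eq_zero, ENNReal.ofReal_eq_zero, not_le]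
    positivity
  have hdensz := hdens z hz ρ hρ0 hρ1
  have h0E : volume E ≠ 0 := by
    refine fun h => absurd (h ▸ hdensz) ?_
    simp only [nonpos_iff_eq_zero, ENNReal.ofReal_eq_zero, not_le]
    positivity
  have hlow : cd * ρ' ^ n ≤ (volume E').toReal := by
    have := ENNReal.toReal_mono hfinE' hdens'
    rwa [ENNReal.toReal_ofReal (by positivity)] at this
  have hup : (volume E).toReal ≤ vr * ρ ^ n := by
    have h1 : volume E ≤ volume (ball z ρ) := measure_mono inter_subset_right
    have h2 := vol_ball_eq hn z hρ0.le
    rw [h2] at h1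
    have := ENNReal.toReal_mono ENNReal.ofReal_ne_top h1
    rwa [ENNReal.toReal_ofReal (by positivity), mul_comm] at this
  set M : ℝ := (sharpMax n β R Ω g z).toReal with hM
  have hM0 : 0 ≤ M := ENNReal.toReal_nonneg
  have hβρ : 0 < ρ ^ β := Real.rpow_pos_of_pos hρ0 β
  have hchain := (abs_setAvg_sub_le hEsub h0E' hfinE hg (setAvg n E g)).trans
    (mul_le_mul_of_nonneg_left (integral_abs_sub_avg_le hρ0 hρR hg h0E hfinE hS)
      (inv_nonneg.2 ENNReal.toReal_nonneg))
  refine hchain.trans ?_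
  have hinv : (volume E').toReal⁻¹ ≤ (cd * ρ' ^ n)⁻¹ := by
    apply inv_anti₀ (by positivity) hlow
  have hpow : ρ ^ n ≤ 2 ^ n * ρ' ^ n := by
    calc ρ ^ n ≤ (2 * ρ') ^ n := pow_le_pow_left₀ hρ0.le h2ρ n
      _ = 2 ^ n * ρ' ^ n := mul_pow _ _ _
  have hstep1 : ρ ^ β * M * (volume E).toReal ≤ ρ ^ β * M * (vr * (2 ^ n * ρ' ^ n)) := by
    apply mul_le_mul_of_nonneg_left _ (by positivity)
    refine hup.trans ?_
    exact mul_le_mul_of_nonneg_left hpow hvr0.le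
  calc (volume E').toReal⁻¹ * (ρ ^ β * M * (volume E).toReal)
      ≤ (cd * ρ' ^ n)⁻¹ * (ρ ^ β * M * (vr * (2 ^ n * ρ' ^ n))) := by
        apply mul_le_mul hinv hstep1 (by positivity) (by positivity)
    _ = 2 ^ n * vr / cd * (ρ ^ β * M) := by
        field_simp

lemma osc_bound {n : ℕ} (hn : 2 ≤ n) {Ω : Set (Rn n)} {β R : ℝ} (hβ : 0 < β) {cd : ℝ}
    (hcd : 0 < cd)
    (hdens : ∀ z ∈ closure Ω, ∀ ρ : ℝ, 0 < ρ → ρ ≤ 1 →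
      ENNReal.ofReal (cd * ρ ^ n) ≤ volume (Ω ∩ ball z ρ))
    {g : Rn n → ℝ} {x : Rn n} (hx : x ∈ closure Ω) {ρ₀ : ℝ} (hρ₀ : 0 < ρ₀)
    (hρ₀R : ρ₀ ≤ R) (hR1 : R ≤ 1)
    (hg : IntegrableOn g (Ω ∩ ball x ρ₀))
    (hS : sharpMax n β R Ω g x ≠ ⊤)
    (htend : Tendsto (fun ρ : ℝ => setAvg n (Ω ∩ ball x ρ) g)
      (nhdsWithin 0 (Set.Ioi 0)) (nhds (g x))) :
    |g x - setAvg n (Ω ∩ ball x ρ₀) g| ≤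
      2 ^ n * (volume (ball (0 : Rn n) 1)).toReal / cd *
        (1 - (2 : ℝ)⁻¹ ^ β)⁻¹ * (ρ₀ ^ β * (sharpMax n β R Ω g x).toReal) := by
  set vr : ℝ := (volume (ball (0 : Rn n) 1)).toReal with hvr
  have hvr0 : 0 < vr :=
    ENNReal.toReal_pos (measure_ball_pos _ _ one_pos).ne' measure_ball_lt_top.ne
  set K : ℝ := 2 ^ n * vr / cd with hK
  have hK0 : 0 < K := by positivity
  set M : ℝ := (sharpMax n β R Ω g x).toReal with hM
  have hM0 : 0 ≤ M := ENNReal.toReal_nonneg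
  set q : ℝ := (2 : ℝ)⁻¹ ^ β with hq
  have hq0 : 0 < q := Real.rpow_pos_of_pos (by norm_num) β
  have hq1 : q < 1 := Real.rpow_lt_one (by norm_num) (by norm_num) hβ
  have h1q : 0 < 1 - q := by linarith
  set ρk : ℕ → ℝ := fun k => ρ₀ * (2 : ℝ)⁻¹ ^ k with hρk
  have hρkpos : ∀ k, 0 < ρk k := fun k => by positivity
  have hρkle : ∀ k, ρk k ≤ ρ₀ := fun k => by
    rw [hρk]
    calc ρ₀ * (2 : ℝ)⁻¹ ^ k ≤ ρ₀ * 1 :=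
        mul_le_mul_of_nonneg_left (pow_le_one₀ (by norm_num) (by norm_num)) hρ₀.le
      _ = ρ₀ := mul_one _
  have hρksucc : ∀ k, ρk k = 2 * ρk (k + 1) := fun k => by
    rw [hρk]; simp only [pow_succ]; ring
  have hρkβ : ∀ k, ρk k ^ β = ρ₀ ^ β * q ^ k := by
    intro k
    rw [hρk, Real.mul_rpow hρ₀.le (by positivity), hq]
    congr 1
    rw [← Real.rpow_natCast ((2:ℝ)⁻¹) k, ← Real.rpow_natCast ((2:ℝ)⁻¹ ^ β) k,
      ← Real.rpow_mul (by norm_num), ← Real.rpow_mul (by norm_num), mul_comm]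
  set a : ℕ → ℝ := fun k => setAvg n (Ω ∩ ball x (ρk k)) g with ha
  have hstep : ∀ k, |a (k + 1) - a k| ≤ K * (ρ₀ ^ β * q ^ k * M) := by
    intro k
    have h := step hn hβ hcd hdens hx hx (hρkpos (k + 1))
      (by rw [hρksucc k]; linarith [hρkpos (k+1)]) (le_of_eq (hρksucc k))
      ((hρkle k).trans hρ₀R) hR1
      (ball_subset_ball (by rw [hρksucc k]; linarith [hρkpos (k+1)]))
      (hg.mono_set (inter_subset_inter_right _ (ball_subset_ball (hρkle k)))) hS
    rw [← hρkβ k]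
    calc |a (k + 1) - a k| ≤ K * (ρk k ^ β * M) := h
      _ = K * (ρk k ^ β * M) := rfl
  have hpartial : ∀ k, |a k - a 0| ≤ K * M * ρ₀ ^ β * ∑ j ∈ Finset.range k, q ^ j := by
    intro k
    induction k with
    | zero => simp
    | succ k ih =>
      have h1 := hstep k
      calc |a (k + 1) - a 0| ≤ |a (k + 1) - a k| + |a k - a 0| := by
            have := abs_sub_le (a (k+1)) (a k) (a 0); linarith
        _ ≤ K * (ρ₀ ^ β * q ^ k * M) + K * M * ρ₀ ^ β * ∑ j ∈ Finset.range k, q ^ j := by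
            linarith
        _ = K * M * ρ₀ ^ β * ∑ j ∈ Finset.range (k + 1), q ^ j := by
            rw [Finset.sum_range_succ]; ring
  have hsum : ∀ k, (∑ j ∈ Finset.range k, q ^ j) ≤ (1 - q)⁻¹ := by
    intro k
    have hgs := geom_sum_mul q k
    have hqk : 0 ≤ q ^ k := by positivity
    rw [← one_div]
    rw [le_div_iff₀ h1q]
    nlinarith
  have hbound : ∀ k, |a k - a 0| ≤ K * (1 - q)⁻¹ * (ρ₀ ^ β * M) := by
    intro k
    refine (hpartial k).trans ?_
    have := hsum k
    have hc : 0 ≤ K * M * ρ₀ ^ β := by positivity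
    calc K * M * ρ₀ ^ β * ∑ j ∈ Finset.range k, q ^ j
        ≤ K * M * ρ₀ ^ β * (1 - q)⁻¹ := mul_le_mul_of_nonneg_left this hc
      _ = K * (1 - q)⁻¹ * (ρ₀ ^ β * M) := by ring
  have hρtend : Tendsto ρk atTop (nhdsWithin 0 (Set.Ioi 0)) := by
    rw [tendsto_nhdsWithin_iff]
    constructor
    · have := (tendsto_pow_atTop_nhds_zero_of_lt_one (by norm_num : (0:ℝ) ≤ 2⁻¹)
        (by norm_num : (2:ℝ)⁻¹ < 1)).const_mul ρ₀
      simpa [hρk] using this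
    · exact Filter.Eventually.of_forall fun k => hρkpos k
  have hatend : Tendsto a atTop (nhds (g x)) := htend.comp hρtend
  have habs : Tendsto (fun k => |a k - a 0|) atTop (nhds (|g x - a 0|)) :=
    ((hatend.sub_const (a 0)).abs)
  have hfinal : |g x - a 0| ≤ K * (1 - q)⁻¹ * (ρ₀ ^ β * M) :=
    le_of_tendsto habs (Filter.Eventually.of_forall hbound)
  have ha0 : a 0 = setAvg n (Ω ∩ ball x ρ₀) g := by
    rw [ha]; simp [hρk]
  rw [← ha0]
  exact hfinal

set_option maxHeartbeats 1000000 in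
/-- pointwise Hölder control of a function at `Ω`-Lebesgue points via the
fractional sharp maximal function. -/
theorem statement5
    (n : ℕ) (hn : 2 ≤ n) (s α : ℝ) (hs : 0 < s) (hs1 : s < 1) (hα : 0 < α) (hαs : α < s)
    (Ω : Set (Rn n)) (hΩ : IsC1Domain n α Ω)
    (β : ℝ) (hβ : 0 < β) (hβ1 : β ≤ 1) :
    ∃ c : ℝ, 0 < c ∧
      ∀ (x₀ : Rn n), x₀ ∈ closure Ω →
      ∀ R : ℝ, 0 < R → R ≤ 1 →
      ∀ g : Rn n → ℝ, MeasureTheory.IntegrableOn g (Ω ∩ ball x₀ (2 * R)) →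
      ∀ x ∈ closure Ω ∩ ball x₀ (R / 4), ∀ y ∈ closure Ω ∩ ball x₀ (R / 4),
        Filter.Tendsto (fun ρ : ℝ => setAvg n (Ω ∩ ball x ρ) g)
          (nhdsWithin 0 (Set.Ioi 0)) (nhds (g x)) →
        Filter.Tendsto (fun ρ : ℝ => setAvg n (Ω ∩ ball y ρ) g)
          (nhdsWithin 0 (Set.Ioi 0)) (nhds (g y)) →
        ENNReal.ofReal |g x - g y| ≤
          ENNReal.ofReal c * (sharpMax n β R Ω g x + sharpMax n β R Ω g y) *
            ENNReal.ofReal (‖x - y‖ ^ β) := by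
  obtain ⟨cd, hcd, hdens⟩ := density hn hα hΩ
  set vr : ℝ := (volume (ball (0 : Rn n) 1)).toReal with hvr
  have hvr0 : 0 < vr :=
    ENNReal.toReal_pos (measure_ball_pos _ _ one_pos).ne' measure_ball_lt_top.ne
  set K : ℝ := 2 ^ n * vr / cd with hK
  have hK0 : 0 < K := by positivity
  set q : ℝ := (2 : ℝ)⁻¹ ^ β with hq
  have hq0 : 0 < q := Real.rpow_pos_of_pos (by norm_num) β
  have hq1 : q < 1 := Real.rpow_lt_one (by norm_num) (by norm_num) hβ
  have h1q : 0 < 1 - q := by linarith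
  set T : ℝ := (1 - q)⁻¹ with hT
  have hT0 : 0 < T := by positivity
  refine ⟨K * (3 * T + 2), by positivity, ?_⟩
  intro x₀ hx₀ R hR hR1 g hgint x hx y hy htx hty
  by_cases hxy : x = y
  · subst hxy
    simp
  set Sx := sharpMax n β R Ω g x with hSxd
  set Sy := sharpMax n β R Ω g y with hSyd
  have hxyn : (0:ℝ) < ‖x - y‖ := by
    rw [norm_pos_iff]
    exact sub_ne_zero.2 hxy
  set r : ℝ := dist x y with hr
  have hrn : ‖x - y‖ = r := (dist_eq_norm x y).symm
  have hr0 : 0 < r := dist_pos.2 hxy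
  have hxx₀ : dist x x₀ < R / 4 := mem_ball.1 hx.2
  have hyx₀ : dist y x₀ < R / 4 := mem_ball.1 hy.2
  have hrR : 2 * r ≤ R := by
    have h1 : dist x y ≤ dist x x₀ + dist x₀ y := dist_triangle _ _ _
    rw [dist_comm x₀ y] at h1
    rw [hr]
    linarith
  have hrβ : (0:ℝ) < r ^ β := Real.rpow_pos_of_pos hr0 β
  by_cases hfin : Sx ≠ ⊤ ∧ Sy ≠ ⊤
  swap
  · have htop : Sx + Sy = ⊤ := by
      rcases not_and_or.1 hfin with h | h
      · rw [ENNReal.add_eq_top]; exact Or.inl (not_not.1 h)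
      · rw [ENNReal.add_eq_top]; exact Or.inr (not_not.1 h)
    rw [htop, ENNReal.mul_top, ENNReal.top_mul]
    · exact le_top
    · rw [Ne, ENNReal.ofReal_eq_zero, not_le, hrn]
      exact hrβ
    · rw [Ne, ENNReal.ofReal_eq_zero, not_le]
      positivity
  obtain ⟨hSx, hSy⟩ := hfin
  set Mx : ℝ := Sx.toReal with hMx
  set My : ℝ := Sy.toReal with hMy
  have hMx0 : 0 ≤ Mx := ENNReal.toReal_nonneg
  have hMy0 : 0 ≤ My := ENNReal.toReal_nonneg
  -- integrability on relevant balls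
  have hballyx : ball y r ⊆ ball x (2 * r) := by
    intro w hw
    rw [mem_ball] at hw ⊢
    have := dist_triangle w y x
    rw [dist_comm y x] at this
    rw [hr] at hw ⊢
    linarith
  have hsub2R : Ω ∩ ball x (2 * r) ⊆ Ω ∩ ball x₀ (2 * R) := by
    apply inter_subset_inter_right
    intro w hw
    rw [mem_ball] at hw ⊢
    have := dist_triangle w x x₀
    linarith
  have hgx : IntegrableOn g (Ω ∩ ball x (2 * r)) := hgint.mono_set hsub2R
  have hgy : IntegrableOn g (Ω ∩ ball y r) :=
    hgx.mono_set (inter_subset_inter_right _ hballyx)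
  set A : ℝ := setAvg n (Ω ∩ ball x (2 * r)) g with hA
  set B : ℝ := setAvg n (Ω ∩ ball y r) g with hB
  have oscx : |g x - A| ≤ K * T * ((2 * r) ^ β * Mx) :=
    osc_bound hn hβ hcd hdens hx.1 (by linarith) hrR hR1 hgx hSx htx
  have oscy : |g y - B| ≤ K * T * (r ^ β * My) :=
    osc_bound hn hβ hcd hdens hy.1 hr0 (by linarith) hR1 hgy hSy hty
  have bridge : |B - A| ≤ K * ((2 * r) ^ β * Mx) :=
    step hn hβ hcd hdens hx.1 hy.1 hr0 (by linarith) le_rfl hrR hR1 hballyx hgx hSx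
  have h2rβ : (2 * r) ^ β ≤ 2 * r ^ β := by
    rw [Real.mul_rpow (by norm_num) hr0.le]
    have h1 : (2:ℝ) ^ β ≤ (2:ℝ) ^ (1:ℝ) :=
      Real.rpow_le_rpow_of_exponent_le one_le_two hβ1
    rw [Real.rpow_one] at h1
    exact mul_le_mul_of_nonneg_right h1 hrβ.le
  have hreal : |g x - g y| ≤ K * (3 * T + 2) * ((Mx + My) * r ^ β) := by
    have htri : |g x - g y| ≤ |g x - A| + |B - A| + |g y - B| := by
      have h1 := abs_sub_le (g x) A (g y)
      have h2 := abs_sub_le A B (g y)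
      have h3 : |A - B| = |B - A| := abs_sub_comm _ _
      have h4 : |B - g y| = |g y - B| := abs_sub_comm _ _
      linarith
    have hx1 : K * T * ((2 * r) ^ β * Mx) ≤ K * T * (2 * r ^ β * Mx) := by
      apply mul_le_mul_of_nonneg_left _ (by positivity)
      exact mul_le_mul_of_nonneg_right h2rβ hMx0
    have hx2 : K * ((2 * r) ^ β * Mx) ≤ K * (2 * r ^ β * Mx) := by
      apply mul_le_mul_of_nonneg_left _ hK0.le
      exact mul_le_mul_of_nonneg_right h2rβ hMx0
    have h5 : |g x - A| + |B - A| + |g y - B| ≤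
        K * T * (2 * r ^ β * Mx) + K * (2 * r ^ β * Mx) + K * T * (r ^ β * My) := by
      linarith
    refine (htri.trans h5).trans ?_
    nlinarith [mul_nonneg (mul_nonneg hK0.le hrβ.le) hMx0,
      mul_nonneg (mul_nonneg (mul_nonneg hK0.le hT0.le) hrβ.le) hMy0,
      mul_nonneg (mul_nonneg hK0.le hT0.le) (mul_nonneg hrβ.le hMx0)]
  have hSsum : Sx + Sy = ENNReal.ofReal (Mx + My) := by
    rw [ENNReal.ofReal_add hMx0 hMy0, hMx, hMy, ENNReal.ofReal_toReal hSx,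
      ENNReal.ofReal_toReal hSy]
  rw [hSsum, hrn, ← ENNReal.ofReal_mul (by positivity),
    ← ENNReal.ofReal_mul (by positivity)]
  exact ENNReal.ofReal_le_ofReal (by
    calc |g x - g y| ≤ K * (3 * T + 2) * ((Mx + My) * r ^ β) := hreal
      _ = K * (3 * T + 2) * (Mx + My) * r ^ β := by ring)

end NonlocalCZ
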